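/- Let g be the Lie algebra A_{4,2}^{−1}. Define r : g* → g by r(ε1) = e3, r(ε2) = −e4, r(ε3) = −e1, r(ε4) = e2 (the 2-vector e1∧e3 − e2∧e4). Then r is a bijective skew-symmetric solution of the CYBE, and for all real numbers n1, n2, n3, n4, the endomorphism n defined by n(e1) = n1·e1 + n2·e2, n(e2) = n3·e2, n(e3) = n4·e2 + n1·e3, n(e4) = n4·e1 − n2·e3 + n3·e4 makes (r, n) an r-n structure on g. -/

import Mathlib

noncomputable section

open Module

variable {g : Type*} [LieRing g] [LieAlgebra ℝ g]

/-- The coadjoint operator: `(coad X α) Y = -α ⁅X, Y⁆`. -/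
def coad (X : g) : Module.Dual ℝ g →ₗ[ℝ] Module.Dual ℝ g :=
  -(LieAlgebra.ad ℝ g X).dualMap

/-- A linear map `r : g* → g` is skew-symmetric if `α (r β) = -β (r α)`. -/
def IsSkew (r : Module.Dual ℝ g →ₗ[ℝ] g) : Prop :=
  ∀ α β : Module.Dual ℝ g, α (r β) = -β (r α)

/-- The Sklyanin bracket on `g*` defined by `r`. -/
def sklyanin (r : Module.Dual ℝ g →ₗ[ℝ] g) (α β : Module.Dual ℝ g) : Module.Dual ℝ g :=
  coad (r α) β - coad (r β) α

/-- `r` is a solution of the classical Yang-Baxter equation. -/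
def IsCYBE (r : Module.Dual ℝ g →ₗ[ℝ] g) : Prop :=
  ∀ α β : Module.Dual ℝ g, r (sklyanin r α β) = ⁅r α, r β⁆

/-- `n : g → g` is a Nijenhuis operator. -/
def IsNijenhuis (n : g →ₗ[ℝ] g) : Prop :=
  ∀ X Y : g, ⁅n X, n Y⁆ - n ⁅n X, Y⁆ - n ⁅X, n Y⁆ + n (n ⁅X, Y⁆) = 0

/-- `(r, n)` is an r-n structure on `g`. -/
def IsRN (r : Module.Dual ℝ g →ₗ[ℝ] g) (n : g →ₗ[ℝ] g) : Prop :=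
  IsSkew r ∧ IsCYBE r ∧ IsNijenhuis n ∧
    (∀ α : Module.Dual ℝ g, n (r α) = r (n.dualMap α)) ∧
    ∀ α β : Module.Dual ℝ g,
      coad (r α) (n.dualMap β) - coad (r β) (n.dualMap α)
        - n.dualMap (coad (r α) β) + n.dualMap (coad (r β) α) = 0

/-- The Nijenhuis concomitant of two endomorphisms. -/
def nijConcomitant (n' n : g →ₗ[ℝ] g) (X Y : g) : g :=
  ⁅n' X, n Y⁆ + ⁅n X, n' Y⁆ - n' ⁅n X, Y⁆ - n' ⁅X, n Y⁆ - n ⁅n' X, Y⁆ - n ⁅X, n' Y⁆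
    + n' (n ⁅X, Y⁆) + n (n' ⁅X, Y⁆)

/-- The underlying space of the Lie algebra `A42`: `ℝ⁴`. -/
def A42 : Type := Fin 4 → ℝ

instance : AddCommGroup A42 := inferInstanceAs (AddCommGroup (Fin 4 → ℝ))
instance : Module ℝ A42 := inferInstanceAs (Module ℝ (Fin 4 → ℝ))

namespace A42

@[simp] theorem add_apply (x y : A42) (i : Fin 4) : (x + y) i = x i + y i := rfl
@[simp] theorem smul_apply (c : ℝ) (x : A42) (i : Fin 4) : (c • x) i = c * x i := rfl
@[simp] theorem neg_apply (x : A42) (i : Fin 4) : (-x) i = -(x i) := rfl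
@[simp] theorem sub_apply (x y : A42) (i : Fin 4) : (x - y) i = x i - y i := rfl
@[simp] theorem zero_apply (i : Fin 4) : (0 : A42) i = 0 := rfl

/-- The bracket of `A42`. -/
def br (x y : A42) : A42 := fun i =>
  if i = 0 then -(x 0 * y 3 - x 3 * y 0)
  else if i = 1 then (x 1 * y 3 - x 3 * y 1) + (x 2 * y 3 - x 3 * y 2)
  else if i = 2 then x 2 * y 3 - x 3 * y 2
  else 0

@[simp] theorem br_apply (x y : A42) (i : Fin 4) :
    br x y i = if i = 0 then -(x 0 * y 3 - x 3 * y 0)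
      else if i = 1 then (x 1 * y 3 - x 3 * y 1) + (x 2 * y 3 - x 3 * y 2)
      else if i = 2 then x 2 * y 3 - x 3 * y 2
      else 0 := rfl

instance : LieRing A42 where
  bracket := br
  add_lie x y z := by funext i; show br (x + y) z i = (br x z + br y z) i; simp; split_ifs <;> ring
  lie_add x y z := by funext i; show br x (y + z) i = (br x y + br x z) i; simp; split_ifs <;> ring
  lie_self x := by funext i; show br x x i = (0 : A42) i; simp; split_ifs <;> ring
  leibniz_lie x y z := by
    funext i; show br x (br y z) i = (br (br x y) z + br y (br x z)) i
    simp; split_ifs <;> ring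

instance : LieAlgebra ℝ A42 where
  lie_smul c x y := by
    funext i; show br x (c • y) i = (c • br x y) i; simp; split_ifs <;> ring

/-- Basis vectors `e1, e2, e3, e4` (zero-indexed). -/
def e (i : Fin 4) : A42 := fun j => if j = i then 1 else 0

/-- Dual basis `ε1, ε2, ε3, ε4` (zero-indexed). -/
def eps (i : Fin 4) : Module.Dual ℝ A42 where
  toFun x := x i
  map_add' _ _ := rfl
  map_smul' _ _ := rfl

end A42


namespace A42

@[simp] theorem eps_apply' (i : Fin 4) (x : A42) : eps i x = x i := rfl

@[simp] theorem e_apply' (i j : Fin 4) : e i j = if j = i then 1 else 0 := rfl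

theorem decomp (x : A42) : x = x 0 • e 0 + x 1 • e 1 + x 2 • e 2 + x 3 • e 3 := by
  funext j; fin_cases j <;> simp [e]

@[simp] theorem eval4 (α : Module.Dual ℝ A42) (p q s t : ℝ) :
    α ![p, q, s, t] = p * α (e 0) + q * α (e 1) + s * α (e 2) + t * α (e 3) := by
  have h : (![p, q, s, t] : A42) = p • e 0 + q • e 1 + s • e 2 + t • e 3 := by
    funext j; fin_cases j <;> simp [e]
  rw [h]; simp [smul_eq_mul]

theorem dual_eval (α : Module.Dual ℝ A42) (x : A42) :
    α x = α (e 0) * x 0 + α (e 1) * x 1 + α (e 2) * x 2 + α (e 3) * x 3 := by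
  conv_lhs => rw [decomp x]
  simp [smul_eq_mul, mul_comm]

@[simp] theorem lie_vec (x y : A42) :
    ⁅x, y⁆ = ![-(x 0 * y 3 - x 3 * y 0), (x 1 * y 3 - x 3 * y 1) + (x 2 * y 3 - x 3 * y 2),
      x 2 * y 3 - x 3 * y 2, 0] := by
  funext j; fin_cases j <;> rfl

@[simp] theorem coad_apply' (X : A42) (α : Module.Dual ℝ A42) (y : A42) :
    coad X α y = -α ⁅X, y⁆ := rfl

@[simp] theorem coad_apply'' (X : Fin 4 → ℝ) (α : Module.Dual ℝ A42) (y : A42) :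
    coad (g := A42) X α y = -α (@Bracket.bracket A42 A42 _ X y) := rfl

theorem sub_applyFF (x y : Fin 4 → ℝ) (i : Fin 4) :
    @HSub.hSub A42 A42 A42 _ x y i = x i - y i := rfl

theorem sub_applyAF (x : A42) (y : Fin 4 → ℝ) (i : Fin 4) :
    @HSub.hSub A42 A42 A42 _ x y i = x i - y i := rfl

theorem add_applyAF (x : A42) (y : Fin 4 → ℝ) (i : Fin 4) :
    @HAdd.hAdd A42 A42 A42 _ x y i = x i + y i := rfl

theorem lie_vecFF (x y : Fin 4 → ℝ) :
    @Bracket.bracket A42 A42 _ x y = ![-(x 0 * y 3 - x 3 * y 0),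
      (x 1 * y 3 - x 3 * y 1) + (x 2 * y 3 - x 3 * y 2), x 2 * y 3 - x 3 * y 2, 0] := lie_vec x y

theorem lie_vecFA (x : Fin 4 → ℝ) (y : A42) :
    @Bracket.bracket A42 A42 _ x y = ![-(x 0 * y 3 - x 3 * y 0),
      (x 1 * y 3 - x 3 * y 1) + (x 2 * y 3 - x 3 * y 2), x 2 * y 3 - x 3 * y 2, 0] := lie_vec x y

theorem lie_vecAF (x : A42) (y : Fin 4 → ℝ) :
    @Bracket.bracket A42 A42 _ x y = ![-(x 0 * y 3 - x 3 * y 0),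
      (x 1 * y 3 - x 3 * y 1) + (x 2 * y 3 - x 3 * y 2), x 2 * y 3 - x 3 * y 2, 0] := lie_vec x y

end A42

open A42 in
/-- On the Lie algebra `A_{4,2}^{-1}` (bracket `[e1,e4] = -e1`,
`[e2,e4] = e2`, `[e3,e4] = e2 + e3`), the map `r` with `r(ε1) = e3`, `r(ε2) = -e4`,
`r(ε3) = -e1`, `r(ε4) = e2` (the 2-vector `e1∧e3 - e2∧e4`) is a bijective skew-symmetric
solution of the CYBE, and for all reals `n1, n2, n3, n4`, the endomorphism `n` with
`n(e1) = n1·e1 + n2·e2`, `n(e2) = n3·e2`, `n(e3) = n4·e2 + n1·e3`,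
`n(e4) = n4·e1 - n2·e3 + n3·e4` makes `(r, n)` an r-n structure on `g`. -/
theorem a42_r_and_rn
    (r : Module.Dual ℝ A42 →ₗ[ℝ] A42)
    (h1 : r (eps 0) = e 2) (h2 : r (eps 1) = -e 3)
    (h3 : r (eps 2) = -e 0) (h4 : r (eps 3) = e 1) :
    (IsSkew r ∧ Function.Bijective r ∧ IsCYBE r) ∧
    ∀ (n1 n2 n3 n4 : ℝ) (n : A42 →ₗ[ℝ] A42),
      n (e 0) = n1 • e 0 + n2 • e 1 →
      n (e 1) = n3 • e 1 →
      n (e 2) = n4 • e 1 + n1 • e 2 →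
      n (e 3) = n4 • e 0 - n2 • e 2 + n3 • e 3 →
      IsRN r n := by
  have hr : ∀ α : Module.Dual ℝ A42,
      r α = ![-(α (e 2)), α (e 3), α (e 0), -(α (e 1))] := by
    intro α
    have hd : α = α (e 0) • eps 0 + α (e 1) • eps 1 + α (e 2) • eps 2 + α (e 3) • eps 3 := by
      ext x
      rw [dual_eval α x]
      simp [smul_eq_mul]
    conv_lhs => rw [hd]
    rw [map_add, map_add, map_add, map_smul, map_smul, map_smul, map_smul, h1, h2, h3, h4]
    funext j; fin_cases j <;> simp [e] <;> ring
  have hskew : IsSkew r := by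
    intro α β
    rw [hr β, hr α, eval4, eval4]
    ring
  have hcybe : IsCYBE r := by
    intro α β
    simp only [sklyanin, hr, LinearMap.sub_apply, coad_apply', coad_apply'', lie_vec, lie_vecFF,
      lie_vecFA, lie_vecAF, eval4, e_apply']
    funext j; fin_cases j <;> simp <;> ring
  have hbij : Function.Bijective r := by
    refine Function.bijective_iff_has_inverse.mpr
      ⟨fun x => x 2 • eps 0 - x 3 • eps 1 - x 0 • eps 2 + x 1 • eps 3, ?_, ?_⟩
    · intro α
      ext x
      rw [hr α]
      simp only [LinearMap.add_apply, LinearMap.sub_apply, LinearMap.smul_apply, eps_apply',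
        smul_eq_mul, Matrix.cons_val_zero, Matrix.cons_val_one, Matrix.head_cons,
        Matrix.cons_val_two, Matrix.tail_cons, Matrix.cons_val_three]
      rw [dual_eval α x]
      ring
    · intro x
      rw [map_add, map_sub, map_sub, map_smul, map_smul, map_smul, map_smul, h1, h2, h3, h4]
      funext j; fin_cases j <;> simp [e] <;> ring
  refine ⟨⟨hskew, hbij, hcybe⟩, ?_⟩
  intro n1 n2 n3 n4 n hn0 hn1 hn2 hn3
  have hn : ∀ x : A42,
      n x = ![n1 * x 0 + n4 * x 3, n2 * x 0 + n3 * x 1 + n4 * x 2, n1 * x 2 - n2 * x 3,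
        n3 * x 3] := by
    intro x
    conv_lhs => rw [decomp x]
    rw [map_add, map_add, map_add, map_smul, map_smul, map_smul, map_smul, hn0, hn1, hn2, hn3]
    funext j; fin_cases j <;> simp [e] <;> ring
  have hn' : ∀ x : Fin 4 → ℝ, n x = ![n1 * x 0 + n4 * x 3, n2 * x 0 + n3 * x 1 + n4 * x 2,
      n1 * x 2 - n2 * x 3, n3 * x 3] := fun x => hn x
  refine ⟨hskew, hcybe, ?_, ?_, ?_⟩
  · intro X Y
    simp only [lie_vec, lie_vecFF, lie_vecFA, lie_vecAF, hn, hn', Matrix.cons_val_zero, Matrix.cons_val_one, Matrix.head_cons,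
      Matrix.cons_val_two, Matrix.tail_cons, Matrix.cons_val_three]
    funext j; fin_cases j <;> simp [sub_applyFF, sub_applyAF, add_applyAF] <;> ring
  · intro α
    simp only [hr, hn, hn', LinearMap.dualMap_apply, eval4, e_apply']
    funext j; fin_cases j <;> simp <;> ring
  · intro α β
    ext x
    simp only [LinearMap.sub_apply, LinearMap.add_apply, LinearMap.zero_apply, coad_apply',
      LinearMap.dualMap_apply, hr, hn, hn', coad_apply'', lie_vec, lie_vecFF, lie_vecFA, lie_vecAF,
      eval4, e_apply']
    simp
    ring
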